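/- An n-fold Pfister form ⟨⟨a_1, …, a_n⟩⟩ over a field k of characteristic not 2 is either anisotropic or hyperbolic. -/

import Mathlib

open QuadraticMap

/-- The `n`-fold Pfister form `⟨⟨a₁, …, aₙ⟩⟩ = ⟨1, −a₁⟩ ⊗ … ⊗ ⟨1, −aₙ⟩`, realized as
the diagonal form of dimension `2^n` whose entries are the products `∏_{i ∈ S} (−aᵢ)`
over subsets `S ⊆ {1, …, n}`. -/
noncomputable def pfisterForm (k : Type*) [Field k] {n : ℕ} (a : Fin n → k) :
    QuadraticForm k (Finset (Fin n) → k) :=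
  QuadraticMap.weightedSumSquares k (fun S : Finset (Fin n) => ∏ i ∈ S, (-(a i)))

/-- The split form `r·ℍ`, an orthogonal sum of `r` hyperbolic planes
(in characteristic `≠ 2`, `ℍ ≅ ⟨1, −1⟩`). -/
noncomputable def hyperbolicSum (k : Type*) [Field k] (r : ℕ) :
    QuadraticForm k ((Fin r ⊕ Fin r) → k) :=
  QuadraticMap.weightedSumSquares k
    (Sum.elim (fun _ : Fin r => (1 : k)) (fun _ : Fin r => (-1 : k)))

/-- A quadratic form is hyperbolic if it is isometric to an orthogonal sum of
hyperbolic planes. -/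
def IsHyperbolic {k V : Type*} [Field k] [AddCommGroup V] [Module k V]
    (q : QuadraticForm k V) : Prop :=
  ∃ r : ℕ, q.Equivalent (hyperbolicSum k r)

namespace PfAux

variable {k : Type*} [Field k]
variable {ι ι' ι₁ ι₂ : Type*} [Fintype ι] [Fintype ι'] [Fintype ι₁] [Fintype ι₂]

/-- Abbreviation for a diagonal quadratic form. -/
noncomputable abbrev Wt (w : ι → k) : QuadraticForm k (ι → k) :=
  QuadraticMap.weightedSumSquares k w

lemma Wt_apply (w : ι → k) (v : ι → k) : Wt w v = ∑ i, w i * (v i * v i) := by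
  simp [Wt, smul_eq_mul]

lemma equivalent_of' {V : Type*} [AddCommGroup V] [Module k V] {w : ι → k}
    {Q : QuadraticForm k V} (e : (ι → k) ≃ₗ[k] V)
    (h : ∀ f, Q (e f) = Wt w f) : (Wt w).Equivalent Q :=
  ⟨{ e with map_app' := h }⟩

lemma equivalent_of {w : ι → k} {w' : ι' → k} (e : (ι → k) ≃ₗ[k] (ι' → k))
    (h : ∀ f, Wt w' (e f) = Wt w f) : (Wt w).Equivalent (Wt w') :=
  equivalent_of' e h

lemma Wt_congr {w w' : ι → k} (h : w = w') : (Wt w).Equivalent (Wt w') := by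
  subst h; exact QuadraticMap.Equivalent.refl _

/-- Reindexing a diagonal form along an equivalence of index types. -/
lemma reindex (e : ι ≃ ι') (w : ι' → k) : (Wt (w ∘ e)).Equivalent (Wt w) := by
  refine equivalent_of (LinearEquiv.funCongrLeft k k e.symm) fun f => ?_
  simp only [Wt_apply]
  refine Fintype.sum_equiv e.symm _ _ fun i => ?_
  simp [LinearEquiv.funCongrLeft_apply, LinearMap.funLeft]

lemma Wt_mul_apply (c : k) (w : ι → k) (v : ι → k) :
    Wt (fun i => c * w i) v = c * Wt w v := by
  rw [Wt_apply, Wt_apply, Finset.mul_sum]; exact Finset.sum_congr rfl fun i _ => by ring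

/-- Scaling both diagonal forms by a constant preserves equivalence. -/
lemma smul_congr (c : k) {w : ι → k} {w' : ι' → k}
    (h : (Wt w).Equivalent (Wt w')) :
    (Wt fun i => c * w i).Equivalent (Wt fun i => c * w' i) := by
  obtain ⟨f⟩ := h
  exact ⟨{ f.toLinearEquiv with
    map_app' := fun m => by
      rw [Wt_mul_apply, Wt_mul_apply]
      exact congrArg (c * ·) (f.map_app m) }⟩

/-- Scaling each weight by a nonzero square gives an equivalent form. -/
lemma sq_scale (w u : ι → k) (hu : ∀ i, u i ≠ 0) :
    (Wt w).Equivalent (Wt fun i => u i ^ 2 * w i) := by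
  refine equivalent_of
    (LinearEquiv.piCongrRight fun i => LinearEquiv.smulOfNeZero k k (u i)⁻¹ (inv_ne_zero (hu i)))
    fun f => ?_
  rw [Wt_apply, Wt_apply]
  refine Finset.sum_congr rfl fun i _ => ?_
  have : u i ≠ 0 := hu i
  simp only [LinearEquiv.piCongrRight_apply, LinearEquiv.smulOfNeZero_apply, smul_eq_mul]
  field_simp

/-- A diagonal form over a sum type is equivalent to a product form. -/
lemma sum_elim_equiv_prod (w₁ : ι₁ → k) (w₂ : ι₂ → k) :
    ∀ f : (ι₁ ⊕ ι₂) → k, Wt (Sum.elim w₁ w₂) f = Wt w₁ (f ∘ Sum.inl) + Wt w₂ (f ∘ Sum.inr) := by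
  intro f
  rw [Wt_apply, Wt_apply, Wt_apply, Fintype.sum_sum_type]
  rfl

lemma sum_equiv {w₁ : ι₁ → k} {w₂ : ι₂ → k} {w₁' : ι' → k} {w₂' : ι → k}
    (h₁ : (Wt w₁).Equivalent (Wt w₁')) (h₂ : (Wt w₂).Equivalent (Wt w₂')) :
    (Wt (Sum.elim w₁ w₂)).Equivalent (Wt (Sum.elim w₁' w₂')) := by
  have p₁ : (Wt (Sum.elim w₁ w₂)).Equivalent ((Wt w₁).prod (Wt w₂)) := by
    refine equivalent_of' (LinearEquiv.sumArrowLequivProdArrow ι₁ ι₂ k k) fun f => ?_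
    rw [QuadraticMap.prod_apply, sum_elim_equiv_prod]
    rfl
  have p₂ : (Wt (Sum.elim w₁' w₂')).Equivalent ((Wt w₁').prod (Wt w₂')) := by
    refine equivalent_of' (LinearEquiv.sumArrowLequivProdArrow ι' ι k k) fun f => ?_
    rw [QuadraticMap.prod_apply, sum_elim_equiv_prod]
    rfl
  exact (p₁.trans (h₁.prod h₂)).trans p₂.symm

end PfAux

namespace PfAux

variable {k : Type*} [Field k]
variable {ι ι' : Type*} [Fintype ι] [Fintype ι']

/-- A binary diagonal weight `⟨x, y⟩` indexed by `Bool`. -/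
def bin (x y : k) : Bool → k
  | false => x
  | true => y

@[simp] lemma bin_false (x y : k) : bin x y false = x := rfl
@[simp] lemma bin_true (x y : k) : bin x y true = y := rfl

lemma Wt_bin_apply (x y : k) (v : Bool → k) :
    Wt (bin x y) v = y * (v true * v true) + x * (v false * v false) := by
  rw [Wt_apply, Fintype.sum_bool, bin_true, bin_false]

lemma bin_congr {x y x' y' : k} (hx : x = x') (hy : y = y') : bin x y = bin x' y' := by
  subst hx; subst hy; rfl

/-- Regrouping a sum-indexed function space into pairs. -/
noncomputable def pairLE : ((ι ⊕ ι) → k) ≃ₗ[k] (ι → Bool → k) where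
  toFun f := fun i t => cond t (f (Sum.inr i)) (f (Sum.inl i))
  invFun g := Sum.elim (fun i => g i false) (fun i => g i true)
  map_add' f g := by funext i t; cases t <;> rfl
  map_smul' c f := by funext i t; cases t <;> rfl
  left_inv f := by funext x; cases x <;> rfl
  right_inv g := by funext i t; cases t <;> rfl

lemma pairLE_apply (f : (ι ⊕ ι) → k) :
    (pairLE f : ι → Bool → k) = fun i t => cond t (f (Sum.inr i)) (f (Sum.inl i)) := rfl

lemma sum_elim_equiv_pi (b c : ι → k) :
    (Wt (Sum.elim b c)).Equivalent (QuadraticMap.pi fun i => Wt (bin (b i) (c i))) := by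
  refine equivalent_of' pairLE fun f => ?_
  rw [QuadraticMap.pi_apply, Wt_apply, Fintype.sum_sum_type, ← Finset.sum_add_distrib]
  refine Finset.sum_congr rfl fun i _ => ?_
  rw [Wt_bin_apply, pairLE_apply]
  simp only [Sum.elim_inl, Sum.elim_inr, cond_true, cond_false]
  ring

/-- Combine a family of equivalences of binary forms into an equivalence of
the paired diagonal forms. -/
lemma pair_equiv {b c b' c' : ι → k}
    (h : ∀ i, (Wt (bin (b i) (c i))).Equivalent (Wt (bin (b' i) (c' i)))) :
    (Wt (Sum.elim b c)).Equivalent (Wt (Sum.elim b' c')) :=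
  ((sum_elim_equiv_pi b c).trans (QuadraticMap.Equivalent.pi h)).trans
    (sum_elim_equiv_pi b' c').symm

set_option maxHeartbeats 1000000 in
/-- The binary representation change: if `⟨b, c⟩` represents `d ≠ 0`
then `⟨b, c⟩ ≅ ⟨d, bcd⟩`. -/
lemma binary_rep {b c d x y : k} (hd : d ≠ 0)
    (hx : b * x ^ 2 + c * y ^ 2 = d) :
    (Wt (bin b c)).Equivalent (Wt (bin d (b * c * d))) := by
  refine (equivalent_of (w := bin d (b * c * d)) (w' := bin b c)
    { toFun := fun g t => cond t (y * g false - b * x * g true) (x * g false + c * y * g true)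
      invFun := fun h t => cond t ((y * h false - x * h true) / d)
        ((b * x * h false + c * y * h true) / d)
      map_add' := by intro f g; funext t; cases t <;> (simp only [cond_true, cond_false, Pi.add_apply]; ring)
      map_smul' := by intro r f; funext t; cases t <;> (simp only [cond_true, cond_false, Pi.smul_apply, smul_eq_mul, RingHom.id_apply]; ring)
      left_inv := by
        intro g; funext t
        cases t
        · simp only [cond_true, cond_false]; field_simp; linear_combination g false * hx
        · simp only [cond_true, cond_false]; field_simp; linear_combination g true * hx
      right_inv := by
        intro g; funext t
        cases t
        · simp only [cond_true, cond_false]; field_simp; linear_combination g false * hx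
        · simp only [cond_true, cond_false]; field_simp; linear_combination g true * hx
    } fun g => ?_).symm
  · rw [Wt_bin_apply, Wt_bin_apply]
    simp only [LinearEquiv.coe_mk, LinearMap.coe_mk, AddHom.coe_mk, cond_true, cond_false]
    linear_combination (g false ^ 2 + b * c * g true ^ 2) * hx

end PfAux

namespace PfAux

variable {k : Type*} [Field k]
variable {ι ι' : Type*} [Fintype ι] [Fintype ι']

/-- `⟨c, -c⟩ ≅ ⟨1, -1⟩` in characteristic `≠ 2`. -/
lemma hyp_norm (hchar : (2:k) ≠ 0) {c : k} (hc : c ≠ 0) :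
    (Wt (bin c (-c))).Equivalent (Wt (bin 1 (-1))) := by
  have h1 : c * ((c+1)/(2*c))^2 + (-c) * ((c-1)/(2*c))^2 = 1 := by
    field_simp
    ring
  have e1 := binary_rep (one_ne_zero (α := k)) h1
  have e2 : (Wt (bin (1:k) (-1))).Equivalent (Wt (bin 1 (c * -c * 1))) := by
    refine (sq_scale (bin 1 (-1)) (bin 1 c) ?_).trans (Wt_congr ?_)
    · intro t; cases t; exacts [one_ne_zero, hc]
    · funext t; cases t
      · show (1:k)^2 * 1 = 1; ring
      · show c^2 * (-1) = c * -c * 1; ring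
  exact e1.trans e2.symm

/-- `⟨1, -β⟩ ≅ (1-β)·⟨1, -β⟩` when `1 - β ≠ 0`. -/
lemma one_sub_factor {β : k} (ht : (1:k) - β ≠ 0) :
    (Wt (bin 1 (-β))).Equivalent (Wt (bin (1-β) (-β * (1-β)))) := by
  have h1 : (1:k) * 1^2 + (-β) * 1^2 = 1 - β := by ring
  exact (binary_rep ht h1).trans (Wt_congr (bin_congr rfl (by ring)))

/-- Inductively built Pfister weights. -/
inductive IsPfister : ∀ (ι : Type) [Fintype ι], (ι → k) → Prop
  | base : IsPfister PUnit (fun _ => (1:k))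
  | step {ι : Type} [Fintype ι] {w : ι → k} (b : k) (hb : b ≠ 0) (hw : IsPfister ι w) :
      IsPfister (ι ⊕ ι) (Sum.elim w fun i => -b * w i)

lemma IsPfister.ne_zero {ι : Type} [Fintype ι] {w : ι → k} (h : IsPfister (k := k) ι w) :
    ∀ i, w i ≠ 0 := by
  induction h with
  | base => intro i; exact one_ne_zero
  | step b hb hw ih =>
    intro i
    cases i with
    | inl j => exact ih j
    | inr j => simpa using mul_ne_zero (neg_ne_zero.2 hb) (ih j)

/-- If `c` is a similarity factor of `Q`, it is one of `Q ⊥ (-b)·Q`. -/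
lemma step_smul {ι : Type} [Fintype ι] {w : ι → k} {c : k}
    (hQ : (Wt w).Equivalent (Wt fun i => c * w i)) (b : k) :
    (Wt (Sum.elim w fun i => -b * w i)).Equivalent
      (Wt fun i => c * Sum.elim w (fun i => -b * w i) i) := by
  have h2 : (Wt fun i => -b * w i).Equivalent (Wt fun i => c * (-b * w i)) :=
    (smul_congr (-b) hQ).trans (Wt_congr (funext fun i => by ring))
  refine (sum_equiv hQ h2).trans (Wt_congr ?_)
  funext i; cases i <;> simp

lemma rep_div {ι : Type*} [Fintype ι] {w : ι → k} {e d : k}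
    (h : (Wt w).Equivalent (Wt fun i => e * w i)) (he : e ≠ 0)
    (hx : ∃ y, Wt w y = d) : ∃ y, Wt w y = e⁻¹ * d := by
  obtain ⟨η⟩ := h
  obtain ⟨y, hy⟩ := hx
  have h1 : e * Wt w (η y) = d := by rw [← Wt_mul_apply, η.map_app, hy]
  refine ⟨η y, ?_⟩
  rw [← h1]
  field_simp

/-- Pfister forms are multiplicative: every nonzero represented value is a
similarity factor. -/
theorem pf_mul {ι : Type} [Fintype ι] {w : ι → k} (h : IsPfister (k := k) ι w) :
    ∀ c : k, c ≠ 0 → (∃ x, Wt w x = c) → (Wt w).Equivalent (Wt fun i => c * w i) := by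
  induction h with
  | base =>
    rintro c hc ⟨x, hx⟩
    have hx' : x PUnit.unit * x PUnit.unit = c := by
      rw [← hx, Wt_apply]; simp
    have hne : x PUnit.unit ≠ 0 := by
      intro h0
      exact hc (by rw [← hx', h0, zero_mul])
    refine (sq_scale _ (fun _ => x PUnit.unit) (fun _ => hne)).trans (Wt_congr ?_)
    funext i
    show x PUnit.unit ^ 2 * 1 = c * 1
    rw [← hx']; ring
  | @step ι _ w b hb hw ih =>
    rintro c hc ⟨f, hf⟩
    have hval : c = Wt w (f ∘ Sum.inl) + -b * Wt w (f ∘ Sum.inr) := by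
      rw [← Wt_mul_apply, ← sum_elim_equiv_prod, hf]
    set e := Wt w (f ∘ Sum.inl) with hE
    set d := Wt w (f ∘ Sum.inr) with hD
    by_cases hd : d = 0
    · have hce : e = c := by rw [hval, hd]; ring
      exact step_smul (ih c hc ⟨f ∘ Sum.inl, hce⟩) b
    · by_cases he : e = 0
      · have hcd : c = -b * d := by rw [hval, he]; ring
        have hPd := step_smul (ih d hd ⟨f ∘ Sum.inr, rfl⟩) b
        have hPb : (Wt (Sum.elim w fun i => -b * w i)).Equivalent
            (Wt fun i => -b * Sum.elim w (fun i => -b * w i) i) := by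
          have s1 : (Wt (Sum.elim w fun i => -b * w i)).Equivalent
              (Wt (Sum.elim (fun i => -b * w i) w)) := by
            refine (Wt_congr ?_).trans
              (reindex (Equiv.sumComm ι ι) (Sum.elim (fun i => -b * w i) w))
            funext i; cases i <;> rfl
          have s2 : (Wt (Sum.elim (fun i => -b * w i) w)).Equivalent
              (Wt (Sum.elim (fun i => -b * w i) (fun i => b^2 * w i))) :=
            sum_equiv (QuadraticMap.Equivalent.refl _) (sq_scale w (fun _ => b) (fun _ => hb))
          refine (s1.trans s2).trans (Wt_congr ?_)
          funext i; cases i <;> simp <;> ring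
        exact hPd.trans ((smul_congr d hPb).trans
          (Wt_congr (funext fun i => by rw [hcd]; ring)))
      · have hQe := ih e he ⟨f ∘ Sum.inl, rfl⟩
        have hrep : ∃ y, Wt w y = e⁻¹ * d := rep_div hQe he ⟨f ∘ Sum.inr, rfl⟩
        have hd'0 : e⁻¹ * d ≠ 0 := mul_ne_zero (inv_ne_zero he) hd
        have hQd' := ih (e⁻¹ * d) hd'0 hrep
        set β := b * (e⁻¹ * d) with hβ
        have hβ0 : β ≠ 0 := mul_ne_zero hb hd'0
        have hct : c = e * (1 - β) := by
          rw [hval, hβ]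
          field_simp
          ring
        have ht0 : (1:k) - β ≠ 0 := by
          intro h0
          exact hc (by rw [hct, h0, mul_zero])
        have step1 : (Wt (Sum.elim w fun i => -b * w i)).Equivalent
            (Wt (Sum.elim w fun i => -β * w i)) :=
          sum_equiv (QuadraticMap.Equivalent.refl _)
            ((smul_congr (-b) hQd').trans (Wt_congr (funext fun i => by rw [hβ]; ring)))
        have step2 : (Wt (Sum.elim w fun i => -β * w i)).Equivalent
            (Wt (Sum.elim (fun i => (1-β) * w i) (fun i => (1-β) * (-β * w i)))) := by
          refine pair_equiv fun i => ?_
          have base := one_sub_factor (β := β) ht0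
          have hsc := smul_congr (w i) base
          refine (Wt_congr ?_).trans (hsc.trans (Wt_congr ?_))
          · funext t; cases t
            · show w i = w i * 1; ring
            · show -β * w i = w i * -β; ring
          · funext t; cases t
            · show w i * (1 - β) = (1-β) * w i; ring
            · show w i * (-β * (1-β)) = (1-β) * (-β * w i); ring
        have step2' : (Wt (Sum.elim w fun i => -β * w i)).Equivalent
            (Wt fun i => (1-β) * Sum.elim w (fun i => -β * w i) i) := by
          refine step2.trans (Wt_congr ?_)
          funext i; cases i <;> simp
        have hPt : (Wt (Sum.elim w fun i => -b * w i)).Equivalent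
            (Wt fun i => (1-β) * Sum.elim w (fun i => -b * w i) i) :=
          (step1.trans step2').trans (smul_congr ((1:k)-β) step1).symm
        have hPe := step_smul hQe b
        exact hPe.trans ((smul_congr e hPt).trans
          (Wt_congr (funext fun i => by rw [hct]; ring)))

end PfAux

namespace PfAux

variable {k : Type*} [Field k]

lemma aniso_of_equiv {V W : Type*} [AddCommGroup V] [Module k V] [AddCommGroup W] [Module k W]
    {Q₁ : QuadraticForm k V} {Q₂ : QuadraticForm k W} (h : Q₁.Equivalent Q₂)
    (h2 : Q₂.Anisotropic) : Q₁.Anisotropic := by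
  obtain ⟨η⟩ := h
  intro x hx
  have hz : η.toLinearEquiv x = 0 := by
    have : Q₂ (η x) = 0 := by rw [η.map_app, hx]
    have := h2 _ this
    rw [QuadraticMap.IsometryEquiv.coe_toLinearEquiv]
    exact this
  exact (LinearEquiv.map_eq_zero_iff _).mp hz

lemma neg_pair_hyp (hchar : (2:k) ≠ 0) {ι : Type*} [Fintype ι] {w : ι → k}
    (hw : ∀ i, w i ≠ 0) :
    (Wt (Sum.elim w (fun i => -w i))).Equivalent
      (Wt (Sum.elim (fun _ : ι => (1:k)) (fun _ : ι => -1))) :=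
  pair_equiv fun i => hyp_norm hchar (hw i)

lemma sum_reindex_fin {ι : Type*} [Fintype ι] :
    (Wt (Sum.elim (fun _ : ι => (1:k)) (fun _ : ι => -1))).Equivalent
      (Wt (Sum.elim (fun _ : Fin (Fintype.card ι) => (1:k)) (fun _ : Fin (Fintype.card ι) => -1))) := by
  have e : Fin (Fintype.card ι) ≃ ι := (Fintype.equivFin ι).symm
  have h2 : (Sum.elim (fun _ : ι => (1:k)) (fun _ : ι => -1)) ∘ (Equiv.sumCongr e e)
      = Sum.elim (fun _ : Fin (Fintype.card ι) => (1:k)) (fun _ => -1) := by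
    funext x; cases x <;> simp
  exact (reindex (Equiv.sumCongr e e) _).symm.trans (Wt_congr h2)

lemma sum_shuffle {A : Type*} [Fintype A] :
    (Wt (Sum.elim (Sum.elim (fun _ : A => (1:k)) (fun _ : A => -1))
        (Sum.elim (fun _ : A => (1:k)) (fun _ : A => -1)))).Equivalent
      (Wt (Sum.elim (fun _ : A ⊕ A => (1:k)) (fun _ : A ⊕ A => -1))) := by
  have h2 : (Sum.elim (fun _ : A ⊕ A => (1:k)) (fun _ : A ⊕ A => -1)) ∘ (Equiv.sumSumSumComm A A A A)
      = Sum.elim (Sum.elim (fun _ : A => (1:k)) (fun _ : A => -1))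
          (Sum.elim (fun _ : A => (1:k)) (fun _ : A => -1)) := by
    funext x
    rcases x with (x|x) <;> rcases x with (x|x) <;> simp [Equiv.sumSumSumComm]
  exact (Wt_congr h2.symm).trans (reindex _ _)

/-- Dichotomy: a Pfister form is anisotropic or split. -/
theorem pf_dich (hchar : (2:k) ≠ 0) {ι : Type} [Fintype ι] {w : ι → k}
    (h : IsPfister (k := k) ι w) :
    (Wt w).Anisotropic ∨ ∃ r : ℕ, (Wt w).Equivalent
      (Wt (Sum.elim (fun _ : Fin r => (1:k)) (fun _ : Fin r => -1))) := by
  induction h with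
  | base =>
    left
    intro x hx
    have hxx : x PUnit.unit * x PUnit.unit = 0 := by rw [← hx, Wt_apply]; simp
    have hz := mul_self_eq_zero.mp hxx
    funext i; cases i; simpa using hz
  | @step ι _ w b hb hw ih =>
    rcases ih with ihA | ⟨r, ihH⟩
    · by_cases hP : (Wt (Sum.elim w fun i => -b * w i)).Anisotropic
      · exact Or.inl hP
      · right
        simp only [QuadraticMap.Anisotropic] at hP
        push_neg at hP
        obtain ⟨f, hf0, hfne⟩ := hP
        have hval : Wt w (f ∘ Sum.inl) + -b * Wt w (f ∘ Sum.inr) = 0 := by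
          rw [← Wt_mul_apply, ← sum_elim_equiv_prod, hf0]
        have hy : Wt w (f ∘ Sum.inr) ≠ 0 := by
          intro h0
          rw [h0, mul_zero, add_zero] at hval
          apply hfne
          have hx1 := ihA _ hval
          have hy1 := ihA _ h0
          funext i
          cases i with
          | inl j => exact congrFun hx1 j
          | inr j => exact congrFun hy1 j
        have hx : Wt w (f ∘ Sum.inl) ≠ 0 := by
          intro h0
          rw [h0, zero_add] at hval
          exact hy ((mul_eq_zero.mp hval).resolve_left (neg_ne_zero.2 hb))
        have hQx := pf_mul hw _ hx ⟨f ∘ Sum.inl, rfl⟩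
        have hQy := pf_mul hw _ hy ⟨f ∘ Sum.inr, rfl⟩
        have hQyi : (Wt w).Equivalent (Wt fun i => (Wt w (f ∘ Sum.inr))⁻¹ * w i) := by
          have t1 : (Wt fun i => (Wt w (f ∘ Sum.inr))⁻¹ * w i).Equivalent (Wt w) :=
            (smul_congr _ hQy).trans (Wt_congr (funext fun i => by rw [← mul_assoc, inv_mul_cancel₀ hy, one_mul]))
          exact t1.symm
        have hb' : b = Wt w (f ∘ Sum.inl) * (Wt w (f ∘ Sum.inr))⁻¹ := by
          rw [eq_mul_inv_iff_mul_eq₀ hy]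
          linear_combination -hval
        have hGb : (Wt w).Equivalent (Wt fun i => b * w i) := by
          refine hQx.trans ((smul_congr (Wt w (f ∘ Sum.inl)) hQyi).trans
            (Wt_congr (funext fun i => ?_)))
          rw [hb']; ring
        have hneg : (Wt fun i => -b * w i).Equivalent (Wt fun i => -w i) := by
          have t := smul_congr (-1 : k) hGb
          have c1 : (Wt fun i => -b * w i).Equivalent (Wt fun i => -1 * (b * w i)) :=
            Wt_congr (funext fun i => by ring)
          have c2 : (Wt fun i => -1 * w i).Equivalent (Wt fun i => -w i) :=
            Wt_congr (funext fun i => by ring)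
          exact c1.trans (t.symm.trans c2)
        have hP1 : (Wt (Sum.elim w fun i => -b * w i)).Equivalent
            (Wt (Sum.elim w fun i => -w i)) :=
          sum_equiv (QuadraticMap.Equivalent.refl _) hneg
        exact ⟨Fintype.card ι, hP1.trans ((neg_pair_hyp hchar hw.ne_zero).trans sum_reindex_fin)⟩
    · right
      have hcomp2 : (Wt fun i => -b * w i).Equivalent
          (Wt (Sum.elim (fun _ : Fin r => (1:k)) fun _ : Fin r => -1)) := by
        have t1 := smul_congr (-b) ihH
        have c1 : (fun i => -b * (Sum.elim (fun _ : Fin r => (1:k)) (fun _ : Fin r => -1)) i)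
            = Sum.elim (fun _ : Fin r => -b) (fun _ : Fin r => -(-b)) := by
          funext i; cases i <;> simp
        exact t1.trans ((Wt_congr c1).trans
          (pair_equiv fun i => hyp_norm hchar (neg_ne_zero.2 hb)))
      have hsum := sum_equiv ihH hcomp2
      exact ⟨Fintype.card (Fin r ⊕ Fin r), hsum.trans (sum_shuffle.trans sum_reindex_fin)⟩

end PfAux

namespace PfAux

variable {k : Type*} [Field k]

/-- Splitting off the first coordinate of a Bool-tuple. -/
def consE (n : ℕ) : ((Fin n → Bool) ⊕ (Fin n → Bool)) ≃ (Fin (n+1) → Bool) :=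
  (Equiv.boolProdEquivSum _).symm.trans (Fin.consEquiv fun _ : Fin (n+1) => Bool)

@[simp] lemma consE_inl {n : ℕ} (s : Fin n → Bool) : consE n (Sum.inl s) = Fin.cons false s := rfl
@[simp] lemma consE_inr {n : ℕ} (s : Fin n → Bool) : consE n (Sum.inr s) = Fin.cons true s := rfl

theorem pf_exists {n : ℕ} (a : Fin n → k) (ha : ∀ i, a i ≠ 0) :
    ∃ (ι : Type) (_ : Fintype ι) (w : ι → k), IsPfister (k := k) ι w ∧
      (Wt (fun s : Fin n → Bool => ∏ i, if s i then -a i else 1)).Equivalent (Wt w) := by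
  induction n with
  | zero =>
    refine ⟨PUnit, inferInstance, fun _ => 1, IsPfister.base, ?_⟩
    have e : (Fin 0 → Bool) ≃ PUnit := Equiv.equivPUnit _
    refine (Wt_congr ?_).trans (reindex e fun _ => (1:k))
    funext s; simp
  | succ n IH =>
    obtain ⟨ι, inst, w, hPf, heq⟩ := IH (fun i => a i.succ) (fun i => ha _)
    refine ⟨ι ⊕ ι, inferInstance, _, IsPfister.step (a 0) (ha 0) hPf, ?_⟩
    have hweight : (fun s : Fin (n+1) → Bool => ∏ i, if s i then -a i else 1) ∘ (consE n)
        = Sum.elim (fun s : Fin n → Bool => ∏ i, if s i then -(a i.succ) else 1)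
            (fun s : Fin n → Bool => -(a 0) * ∏ i, if s i then -(a i.succ) else 1) := by
      funext x
      cases x with
      | inl s =>
        show (∏ i, if (consE n (Sum.inl s)) i then -a i else 1) = _
        rw [consE_inl, Fin.prod_univ_succ]
        simp
      | inr s =>
        show (∏ i, if (consE n (Sum.inr s)) i then -a i else 1) = _
        rw [consE_inr, Fin.prod_univ_succ]
        simp
    have bridge : (Wt (fun s : Fin (n+1) → Bool => ∏ i, if s i then -a i else 1)).Equivalent
        (Wt (Sum.elim (fun s : Fin n → Bool => ∏ i, if s i then -(a i.succ) else 1)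
          (fun s : Fin n → Bool => -(a 0) * ∏ i, if s i then -(a i.succ) else 1))) :=
      (reindex (consE n) _).symm.trans (Wt_congr hweight)
    refine bridge.trans (sum_equiv heq ?_)
    exact (smul_congr (-(a 0)) heq).trans
      (Wt_congr (funext fun i => by simp [neg_mul]))

end PfAux

/-- An `n`-fold Pfister form over a field of characteristic `≠ 2` is either
anisotropic or hyperbolic. -/
theorem stmt_11 {k : Type*} [Field k] (hchar : (2 : k) ≠ 0)
    {n : ℕ} (a : Fin n → k) (ha : ∀ i, a i ≠ 0) :
    (pfisterForm k a).Anisotropic ∨ IsHyperbolic (pfisterForm k a) := by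
  classical
  let e : (Fin n → Bool) ≃ Finset (Fin n) :=
    { toFun := fun s => Finset.univ.filter (fun i => s i)
      invFun := fun S i => decide (i ∈ S)
      left_inv := fun s => by funext i; simp
      right_inv := fun S => by ext i; simp }
  have ebridge : (pfisterForm k a).Equivalent
      (PfAux.Wt (fun s : Fin n → Bool => ∏ i, if s i then -a i else 1)) := by
    have hcomp : (fun S : Finset (Fin n) => ∏ i ∈ S, -(a i)) ∘ e
        = fun s : Fin n → Bool => ∏ i, if s i then -a i else 1 := by
      funext s
      show ∏ i ∈ Finset.univ.filter (fun i => s i), -(a i) = _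
      rw [Finset.prod_filter]
    exact (PfAux.reindex e _).symm.trans (PfAux.Wt_congr hcomp)
  obtain ⟨ι, inst, w, hPf, heq⟩ := PfAux.pf_exists a ha
  rcases PfAux.pf_dich hchar hPf with hA | ⟨r, hH⟩
  · exact Or.inl (PfAux.aniso_of_equiv (ebridge.trans heq) hA)
  · exact Or.inr ⟨r, (ebridge.trans heq).trans hH⟩
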